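/- Let G be a finite connected simple graph with domination number γ(G) ≥ 2 and let H be a finite simple graph. If X is a maximum total mutual-visibility set of the lexicographic product G ∘ H, then for every vertex u ∈ V(G), |({u} × V(H)) ∩ X| ≥ n(H) − 1. -/

import Mathlib

open SimpleGraph

/-- `X` is a total mutual-visibility set of `G`: every two vertices of `G` are `X`-visible,
i.e. joined by a shortest path whose internal vertices avoid `X`. -/
def IsTMVSet {V : Type*} (G : SimpleGraph V) (X : Set V) : Prop :=
  ∀ x y : V, ∃ p : G.Walk x y, p.length = G.dist x y ∧
    ∀ w ∈ p.support, w ≠ x → w ≠ y → w ∉ X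

/-- The total mutual-visibility number of `G`. -/
noncomputable def muT {V : Type*} (G : SimpleGraph V) : ℕ :=
  sSup {n : ℕ | ∃ X : Set V, IsTMVSet G X ∧ X.ncard = n}

/-- `D` is a dominating set of `G`. -/
def IsDomSet {V : Type*} (G : SimpleGraph V) (D : Set V) : Prop :=
  ∀ v : V, v ∉ D → ∃ u ∈ D, G.Adj u v

/-- The domination number of `G`. -/
noncomputable def gammaDom {V : Type*} (G : SimpleGraph V) : ℕ :=
  sInf {n : ℕ | ∃ D : Set V, IsDomSet G D ∧ D.ncard = n}

/-- `D` is a connected dominating set of `G`. -/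
def IsConnDomSet {V : Type*} (G : SimpleGraph V) (D : Set V) : Prop :=
  IsDomSet G D ∧ (G.induce D).Connected

/-- The connected domination number of `G`. -/
noncomputable def gammaConnDom {V : Type*} (G : SimpleGraph V) : ℕ :=
  sInf {n : ℕ | ∃ D : Set V, IsConnDomSet G D ∧ D.ncard = n}

/-- The closed neighborhood of a vertex. -/
def closedNbhd {V : Type*} (G : SimpleGraph V) (v : V) : Set V :=
  insert v (G.neighborSet v)

/-- The set of simplicial vertices of `G`. -/
def simpSet {V : Type*} (G : SimpleGraph V) : Set V :=
  {v | G.IsClique (G.neighborSet v)}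

/-- The set `P(G)` of vertices that appear as the unique common closed neighbor of
two vertices. -/
def pSet {V : Type*} (G : SimpleGraph V) : Set V :=
  {v | ∃ u w : V, closedNbhd G u ∩ closedNbhd G w = {v}}

/-- The set `C(G)` of vertices belonging to every maximum total mutual-visibility set. -/
def compulsorySet {V : Type*} (G : SimpleGraph V) : Set V :=
  {v | ∀ X : Set V, IsTMVSet G X → X.ncard = muT G → v ∈ X}

/-- The set `F(G)` of vertices belonging to no maximum total mutual-visibility set. -/
def forbiddenSet {V : Type*} (G : SimpleGraph V) : Set V :=
  {v | ∀ X : Set V, IsTMVSet G X → X.ncard = muT G → v ∉ X}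

/-- The independent total mutual-visibility number of `G`. -/
noncomputable def muIT {V : Type*} (G : SimpleGraph V) : ℕ :=
  sSup {n : ℕ | ∃ X : Set V, IsTMVSet G X ∧ (∀ u ∈ X, ∀ v ∈ X, ¬ G.Adj u v) ∧ X.ncard = n}

/-- The join `G + H` of two graphs. -/
def joinGraph {V W : Type*} (G : SimpleGraph V) (H : SimpleGraph W) :
    SimpleGraph (V ⊕ W) :=
  SimpleGraph.fromRel (fun x y =>
    (∃ a b, x = Sum.inl a ∧ y = Sum.inl b ∧ G.Adj a b) ∨
    (∃ a b, x = Sum.inr a ∧ y = Sum.inr b ∧ H.Adj a b) ∨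
    (∃ a b, x = Sum.inl a ∧ y = Sum.inr b))

/-- The corona product `G ⊙ H`: a copy of `G` together with a copy `Hᵢ` of `H` for each
vertex `uᵢ` of `G`, where `uᵢ` is joined to all vertices of `Hᵢ`. -/
def coronaProd {V W : Type*} (G : SimpleGraph V) (H : SimpleGraph W) :
    SimpleGraph (V ⊕ V × W) :=
  SimpleGraph.fromRel (fun x y =>
    (∃ a b, x = Sum.inl a ∧ y = Sum.inl b ∧ G.Adj a b) ∨
    (∃ i w w', x = Sum.inr (i, w) ∧ y = Sum.inr (i, w') ∧ H.Adj w w') ∨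
    (∃ i w, x = Sum.inl i ∧ y = Sum.inr (i, w)))

/-- The lexicographic product `G ∘ H`. -/
def lexProd {V W : Type*} (G : SimpleGraph V) (H : SimpleGraph W) :
    SimpleGraph (V × W) where
  Adj x y := G.Adj x.1 y.1 ∨ (x.1 = y.1 ∧ H.Adj x.2 y.2)
  symm := ⟨fun x y h => by
    rcases h with h | ⟨h1, h2⟩
    · exact Or.inl h.symm
    · exact Or.inr ⟨h1.symm, h2.symm⟩⟩
  loopless := ⟨fun x h => by
    rcases h with h | ⟨_, h⟩
    · exact G.loopless.irrefl _ h
    · exact H.loopless.irrefl _ h⟩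

/-- `B` induces a 2-connected subgraph of `G`. -/
def IsTwoConnSet {V : Type*} (G : SimpleGraph V) (B : Set V) : Prop :=
  3 ≤ B.ncard ∧ (G.induce B).Connected ∧ ∀ v ∈ B, (G.induce (B \ {v})).Connected

section AuxTMV

variable {V W : Type*} {G : SimpleGraph V} {H : SimpleGraph W}

private lemma dist_fst_le_walk (hG : G.Connected) :
    ∀ {a b : V × W} (q : (lexProd G H).Walk a b), G.dist a.1 b.1 ≤ q.length := by
  intro a b q
  induction q with
  | nil => simp [SimpleGraph.dist_self]
  | @cons a c b e r ih =>
    have h1 : G.dist a.1 c.1 ≤ 1 := by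
      rcases e with h | ⟨h, _⟩
      · exact le_of_eq (SimpleGraph.dist_eq_one_iff_adj.2 h)
      · rw [h]; simp [SimpleGraph.dist_self]
    calc G.dist a.1 b.1 ≤ G.dist a.1 c.1 + G.dist c.1 b.1 := hG.dist_triangle
      _ ≤ 1 + r.length := add_le_add h1 ih
      _ = (SimpleGraph.Walk.cons e r).length := by
          rw [SimpleGraph.Walk.length_cons]; omega

private lemma lift_walk (c : W) :
    ∀ {s t : V} (p : G.Walk s t), ∃ q : (lexProd G H).Walk (s, c) (t, c),
      q.length = p.length := by
  intro s t p
  induction p with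
  | nil => exact ⟨.nil, rfl⟩
  | cons e r ih =>
    obtain ⟨q', hq'⟩ := ih
    exact ⟨.cons (Or.inl e) q', congrArg (· + 1) hq'⟩

private lemma lexProd_dist_eq (hG : G.Connected) {a b : V × W} (hab : a.1 ≠ b.1) :
    (lexProd G H).dist a b = G.dist a.1 b.1 := by
  obtain ⟨a1, a2⟩ := a
  obtain ⟨b1, b2⟩ := b
  simp only [ne_eq] at hab
  obtain ⟨p, hp⟩ := hG.exists_walk_length_eq_dist a1 b1
  cases p with
  | nil => exact absurd rfl hab
  | @cons _ m _ e r =>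
    obtain ⟨q', hq'⟩ := lift_walk b2 r
    have hadj0 : (lexProd G H).Adj (a1, a2) (m, b2) := Or.inl e
    have hq : (SimpleGraph.Walk.cons hadj0 q').length = G.dist a1 b1 := by
      rw [SimpleGraph.Walk.length_cons, hq', ← hp, SimpleGraph.Walk.length_cons]
    apply le_antisymm
    · calc (lexProd G H).dist (a1, a2) (b1, b2) ≤ _ := SimpleGraph.dist_le _
        _ = G.dist a1 b1 := hq
    · obtain ⟨q, hqd⟩ :=
        (SimpleGraph.Walk.cons hadj0 q').reachable.exists_walk_length_eq_dist
      rw [← hqd]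
      exact dist_fst_le_walk hG q

private lemma fix_walk (hG : G.Connected) {X : Set (V × W)} {u : V} {w1 w2 : W}
    (hw2X : (u, w2) ∉ X) (hne : w2 ≠ w1) :
    ∀ n : ℕ, ∀ {a b : V × W} (a' : V × W), a'.1 = a.1 → (a' = a ∨ a ≠ b) →
      ∀ (q : (lexProd G H).Walk a b), q.IsPath → q.length = n → n = G.dist a.1 b.1 →
      (∀ w ∈ q.support, w ≠ a → w ≠ b → w ∉ X) →
      ∃ q' : (lexProd G H).Walk a' b, q'.length = n ∧
        ∀ w ∈ q'.support, w ≠ a' → w ≠ b → w ∉ X ∧ w ≠ (u, w1) := by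
  intro n
  induction n with
  | zero =>
    intro a b a' ha' hcase q hpath hlen hdist hav
    have hab : a = b := SimpleGraph.Walk.eq_of_length_eq_zero hlen
    have ha'b : a' = b := by
      rcases hcase with rfl | hne'
      · exact hab
      · exact absurd hab hne'
    subst ha'b
    refine ⟨.nil, rfl, ?_⟩
    intro w hw hwa' _
    simp only [SimpleGraph.Walk.support_nil, List.mem_singleton] at hw
    exact absurd hw hwa'
  | succ k ih =>
    intro a b a' ha' hcase q hpath hlen hdist hav
    cases q with
    | nil => simp at hlen
    | @cons _ m _ e r =>
      rw [SimpleGraph.Walk.length_cons] at hlen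
      have hrlen : r.length = k := by omega
      have hPle : G.dist m.1 b.1 ≤ k := hrlen ▸ dist_fst_le_walk hG r
      have hmfst : m.1 ≠ a.1 := by
        intro h
        rw [h] at hPle
        omega
      have hadj : G.Adj a.1 m.1 := by
        rcases e with h | ⟨h, _⟩
        · exact h
        · exact absurd h.symm hmfst
      have hdistm : k = G.dist m.1 b.1 := by
        have htri : G.dist a.1 b.1 ≤ G.dist a.1 m.1 + G.dist m.1 b.1 := hG.dist_triangle
        have h1 : G.dist a.1 m.1 = 1 := SimpleGraph.dist_eq_one_iff_adj.2 hadj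
        omega
      have hma : m ≠ a := fun h => hmfst (by rw [h])
      have hanr : a ∉ r.support := ((SimpleGraph.Walk.cons_isPath_iff e r).1 hpath).2
      have htrans : ∀ w ∈ r.support, w ≠ m → w ≠ b → w ∉ X := by
        intro w hw hwm hwb
        have hwa : w ≠ a := fun h => hanr (h ▸ hw)
        refine hav w ?_ hwa hwb
        rw [SimpleGraph.Walk.support_cons]
        exact List.mem_cons_of_mem _ hw
      by_cases hm1 : m = (u, w1) ∧ m ≠ b
      · obtain ⟨hmu, hmb⟩ := hm1
        have hm'1 : ((u, w2) : V × W).1 = m.1 := by rw [hmu]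
        obtain ⟨r', hr'len, hr'av⟩ :=
          ih (u, w2) hm'1 (Or.inr hmb) r hpath.of_cons hrlen hdistm htrans
        have hadj' : (lexProd G H).Adj a' (u, w2) := by
          refine Or.inl ?_
          rw [ha', hm'1]
          exact hadj
        refine ⟨.cons hadj' r', by simp [hr'len], ?_⟩
        intro w hw hwa' hwb
        rw [SimpleGraph.Walk.support_cons] at hw
        rcases List.mem_cons.1 hw with rfl | hw2'
        · exact absurd rfl hwa'
        · by_cases hwm' : w = (u, w2)
          · subst hwm'
            exact ⟨hw2X, fun h => hne (congrArg Prod.snd h)⟩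
          · exact hr'av w hw2' hwm' hwb
      · obtain ⟨r', hr'len, hr'av⟩ :=
          ih m rfl (Or.inl rfl) r hpath.of_cons hrlen hdistm htrans
        have hadj' : (lexProd G H).Adj a' m := by
          refine Or.inl ?_
          rw [ha']
          exact hadj
        refine ⟨.cons hadj' r', by simp [hr'len], ?_⟩
        intro w hw hwa' hwb
        rw [SimpleGraph.Walk.support_cons] at hw
        rcases List.mem_cons.1 hw with rfl | hw2'
        · exact absurd rfl hwa'
        · by_cases hwm : w = m
          · subst hwm
            have hmem : w ∈ (SimpleGraph.Walk.cons e r).support := by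
              rw [SimpleGraph.Walk.support_cons]
              exact List.mem_cons_of_mem _ (SimpleGraph.Walk.start_mem_support r)
            exact ⟨hav w hmem hma hwb, fun h => hm1 ⟨h, hwb⟩⟩
          · exact hr'av w hw2' hwm hwb

end AuxTMV

/-- In a maximum total mutual-visibility set of `G ∘ H` (with `γ(G) ≥ 2`),
every `H`-layer misses at most one vertex. -/
theorem lexProd_layer_card_of_max_tmv {V W : Type*} [Fintype V] [Fintype W]
    (G : SimpleGraph V) (H : SimpleGraph W) (hG : G.Connected) (hγ : 2 ≤ gammaDom G)
    (X : Set (V × W)) (hX : IsTMVSet (lexProd G H) X)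
    (hmax : X.ncard = muT (lexProd G H)) :
    ∀ u : V, Fintype.card W - 1 ≤ {p : V × W | p.1 = u ∧ p ∈ X}.ncard := by
  classical
  intro u
  by_contra hcon
  push_neg at hcon
  set S : Set W := {w | (u, w) ∈ X} with hS
  have himg : {p : V × W | p.1 = u ∧ p ∈ X} = (fun w => (u, w)) '' S := by
    ext ⟨a, b⟩
    constructor
    · rintro ⟨rfl, h⟩
      exact ⟨b, h, rfl⟩
    · rintro ⟨w, hw, heq⟩
      cases heq
      exact ⟨rfl, hw⟩
  have hScard : {p : V × W | p.1 = u ∧ p ∈ X}.ncard = S.ncard := by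
    rw [himg]
    exact Set.ncard_image_of_injective _ (fun a b h => by injection h)
  have hcompl : S.ncard + Sᶜ.ncard = Fintype.card W := by
    rw [Set.ncard_add_ncard_compl, Nat.card_eq_fintype_card]
  have h2 : 1 < Sᶜ.ncard := by omega
  obtain ⟨w1, w2, hw1, hw2, hw12⟩ := (Set.one_lt_ncard_iff (Set.toFinite _)).1 h2
  have hw1X : (u, w1) ∉ X := hw1
  have hw2X : (u, w2) ∉ X := hw2
  have hdom : ∀ g : V, ∃ z : V, z ≠ g ∧ ¬ G.Adj g z := by
    intro g
    by_contra h
    push_neg at h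
    have hD : IsDomSet G {g} := by
      intro v hv
      exact ⟨g, rfl, h v (by simpa using hv)⟩
    have h1 : (1 : ℕ) ∈ {n : ℕ | ∃ D : Set V, IsDomSet G D ∧ D.ncard = n} :=
      ⟨{g}, hD, Set.ncard_singleton g⟩
    have hle : gammaDom G ≤ 1 := Nat.sInf_le h1
    omega
  have hTMV' : IsTMVSet (lexProd G H) (insert (u, w1) X) := by
    intro x y
    by_cases hxy1 : x.1 = y.1
    · by_cases hxyeq : x = y
      · subst hxyeq
        refine ⟨.nil, by simp [SimpleGraph.dist_self], ?_⟩
        intro w hw hwx _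
        simp only [SimpleGraph.Walk.support_nil, List.mem_singleton] at hw
        exact absurd hw hwx
      · by_cases hadj : (lexProd G H).Adj x y
        · refine ⟨.cons hadj .nil, by simp [SimpleGraph.dist_eq_one_iff_adj.2 hadj], ?_⟩
          intro w hw hwx hwy
          simp only [SimpleGraph.Walk.support_cons, SimpleGraph.Walk.support_nil,
            List.mem_cons, List.mem_singleton, List.not_mem_nil, or_false] at hw
          rcases hw with rfl | rfl
          · exact absurd rfl hwx
          · exact absurd rfl hwy
        · obtain ⟨g, c⟩ := x
          obtain ⟨z, hzg, hzadj⟩ := hdom g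
          obtain ⟨q, hqlen, hqav⟩ := hX (g, c) (z, c)
          have hdzx : (lexProd G H).dist (g, c) (z, c) = G.dist g z :=
            lexProd_dist_eq hG (Ne.symm hzg)
          have hdge2 : 2 ≤ G.dist g z := by
            have h0 : 0 < G.dist g z := hG.pos_dist_of_ne (Ne.symm hzg)
            have h1 : G.dist g z ≠ 1 := fun h =>
              hzadj (SimpleGraph.dist_eq_one_iff_adj.1 h)
            omega
          rw [hdzx] at hqlen
          cases q with
          | nil => exact absurd rfl hzg
          | @cons _ m _ e r =>
            rw [SimpleGraph.Walk.length_cons] at hqlen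
            have hPle : G.dist m.1 z ≤ r.length := dist_fst_le_walk hG r
            have hmfst : m.1 ≠ g := by
              intro h
              rw [h] at hPle
              omega
            have hadjm : G.Adj g m.1 := by
              rcases e with h | ⟨h, _⟩
              · exact h
              · exact absurd h.symm hmfst
            have hmz : m.1 ≠ z := fun h => hzadj (h ▸ hadjm)
            have hmx : m ≠ (g, c) := fun h => hmfst (by rw [h])
            have hmzz : m ≠ (z, c) := fun h => hmz (congrArg Prod.fst h)
            have hmX : m ∉ X := by
              refine hqav m ?_ hmx hmzz
              rw [SimpleGraph.Walk.support_cons]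
              exact List.mem_cons_of_mem _ (SimpleGraph.Walk.start_mem_support r)
            obtain ⟨mid, hmidadj, hmidX⟩ :
                ∃ mid : V × W, G.Adj g mid.1 ∧ mid ∉ insert (u, w1) X := by
              by_cases hmw1 : m = (u, w1)
              · refine ⟨(u, w2), ?_, ?_⟩
                · have : m.1 = u := by rw [hmw1]
                  rw [← this] at *
                  exact hadjm
                · simp only [Set.mem_insert_iff]
                  push_neg
                  exact ⟨fun h => hw12 (congrArg Prod.snd h).symm, hw2X⟩
              · refine ⟨m, hadjm, ?_⟩
                simp only [Set.mem_insert_iff]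
                push_neg
                exact ⟨hmw1, hmX⟩
            have hadjxm : (lexProd G H).Adj (g, c) mid := Or.inl hmidadj
            have hadjmy : (lexProd G H).Adj mid y := Or.inl (by
              rw [← hxy1]
              exact hmidadj.symm)
            refine ⟨.cons hadjxm (.cons hadjmy .nil), ?_, ?_⟩
            · have hdle : (lexProd G H).dist (g, c) y ≤ 2 := by
                have := SimpleGraph.dist_le
                  (SimpleGraph.Walk.cons hadjxm (SimpleGraph.Walk.cons hadjmy .nil))
                simpa using this
              have h0 : 0 < (lexProd G H).dist (g, c) y :=
                (SimpleGraph.Walk.cons hadjxm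
                  (SimpleGraph.Walk.cons hadjmy .nil)).reachable.pos_dist_of_ne hxyeq
              have h1 : (lexProd G H).dist (g, c) y ≠ 1 := fun h =>
                hadj (SimpleGraph.dist_eq_one_iff_adj.1 h)
              simp only [SimpleGraph.Walk.length_cons, SimpleGraph.Walk.length_nil]
              omega
            · intro w hw hwx hwy
              simp only [SimpleGraph.Walk.support_cons, SimpleGraph.Walk.support_nil,
                List.mem_cons, List.mem_singleton, List.not_mem_nil, or_false] at hw
              rcases hw with rfl | rfl | rfl
              · exact absurd rfl hwx
              · exact hmidX
              · exact absurd rfl hwy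
    · obtain ⟨q, hqlen, hqav⟩ := hX x y
      have hd : (lexProd G H).dist x y = G.dist x.1 y.1 := lexProd_dist_eq hG hxy1
      have hpath : q.IsPath := q.isPath_of_length_eq_dist hqlen
      obtain ⟨q', hq'len, hq'av⟩ := fix_walk hG hw2X (fun h => hw12 h.symm) q.length x rfl
        (Or.inl rfl) q hpath rfl (by rw [hqlen, hd]) hqav
      refine ⟨q', by rw [hq'len, hqlen], ?_⟩
      intro w hw hwx hwy
      have hres := hq'av w hw hwx hwy
      simp only [Set.mem_insert_iff]
      push_neg
      exact ⟨hres.2, hres.1⟩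
  have hcard' : (insert (u, w1) X).ncard = X.ncard + 1 :=
    Set.ncard_insert_of_notMem hw1X (Set.toFinite X)
  have hbdd : BddAbove {n : ℕ | ∃ Y : Set (V × W), IsTMVSet (lexProd G H) Y ∧
      Y.ncard = n} := by
    refine ⟨Fintype.card (V × W), ?_⟩
    rintro n ⟨Y, _, rfl⟩
    calc Y.ncard ≤ (Set.univ : Set (V × W)).ncard :=
          Set.ncard_le_ncard (Set.subset_univ Y) Set.finite_univ
      _ = Fintype.card (V × W) := by rw [Set.ncard_univ, Nat.card_eq_fintype_card]
  have hle : X.ncard + 1 ≤ muT (lexProd G H) := by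
    rw [← hcard']
    exact le_csSup hbdd ⟨insert (u, w1) X, hTMV', rfl⟩
  omega
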